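/- For λ > 0, a ∈ ℝ, and s > λ − a, the degenerate Laplace transform of (1+λt)^(−a/λ) is 1/(s+a−λ). -/

import Mathlib

open MeasureTheory Set

theorem degLaplace_degExp (l s a : ℝ) (hl : 0 < l) (hs : l - a < s) :
    ∫ t in Ioi (0 : ℝ), (1 + l * t) ^ (-(s / l)) * (1 + l * t) ^ (-(a / l)) =
      1 / (s + a - l) := by
  set p : ℝ := (s + a) / l with hp
  have hp1 : 1 < p := by
    rw [hp, lt_div_iff₀ hl]
    linarith
  have hbase : ∀ x : ℝ, x ∈ Ici (0 : ℝ) → (0 : ℝ) < 1 + l * x := by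
    intro x hx
    have : 0 ≤ l * x := mul_nonneg hl.le hx
    linarith
  have hcongr : ∀ x ∈ Ioi (0 : ℝ),
      (1 + l * x) ^ (-(s / l)) * (1 + l * x) ^ (-(a / l)) = (1 + l * x) ^ (-p) := by
    intro x hx
    rw [← Real.rpow_add (hbase x (mem_Ici.mpr (le_of_lt (mem_Ioi.mp hx))))]
    congr 1
    rw [hp]
    field_simp
    ring
  rw [setIntegral_congr_fun measurableSet_Ioi hcongr]
  have key : ∫ x in Ioi (0 : ℝ), (1 + l * x) ^ (-p)
      = 0 - (fun x : ℝ => (1 + l * x) ^ (1 - p) / (l * (1 - p))) 0 := by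
    apply integral_Ioi_of_hasDerivAt_of_nonneg'
      (g := fun x : ℝ => (1 + l * x) ^ (1 - p) / (l * (1 - p)))
      (g' := fun x : ℝ => (1 + l * x) ^ (-p))
    · intro x hx
      have hb := hbase x hx
      have h1 : HasDerivAt (fun x : ℝ => 1 + l * x) l x := by
        simpa using ((hasDerivAt_id x).const_mul l).const_add 1
      have h2 : HasDerivAt (fun x : ℝ => (1 + l * x) ^ (1 - p))
          ((1 - p) * (1 + l * x) ^ (1 - p - 1) * l) x := by
        have h0 := Real.hasDerivAt_rpow_const (x := 1 + l * x) (p := 1 - p) (Or.inl hb.ne')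
        exact h0.comp x h1
      have h3 := h2.div_const (l * (1 - p))
      refine h3.congr_deriv ?_
      have hlp : l * (1 - p) ≠ 0 := by
        apply mul_ne_zero hl.ne'
        intro h
        have : p = 1 := by linarith
        linarith
      have hp' : (1 : ℝ) - p ≠ 0 := by linarith
      rw [show (1 : ℝ) - p - 1 = -p by ring]
      field_simp
    · intro x hx
      have := hbase x (mem_Ici.mpr (le_of_lt (mem_Ioi.mp hx)))
      positivity
    · have : Filter.Tendsto (fun x : ℝ => (1 + l * x) ^ (1 - p)) Filter.atTop (nhds 0) := by
        have hb : Filter.Tendsto (fun x : ℝ => 1 + l * x) Filter.atTop Filter.atTop :=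
          Filter.tendsto_atTop_add_const_left _ 1
            (Filter.Tendsto.const_mul_atTop hl Filter.tendsto_id)
        exact (tendsto_rpow_neg_atTop (y := p - 1) (by linarith)).comp hb |>.congr
          (fun x => by rw [Function.comp_apply, neg_sub])
      simpa using this.div_const (l * (1 - p))
  rw [key]
  simp only [mul_zero, add_zero, Real.one_rpow]
  rw [zero_sub]
  have h1 : l * (1 - p) = l - (s + a) := by
    rw [hp]
    field_simp
  rw [h1, show l - (s + a) = -(s + a - l) by ring, div_neg, neg_neg]
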